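/- For every even integer n ≥ 2, the real number −(n+1)·√2 is a Sombor eigenvalue of the conjugacy super power graph P^c(Q_{4n}) of the generalized quaternion group Q_{4n} with multiplicity at least 2n−2; that is, the kernel of S(P^c(Q_{4n})) + (n+1)·√2·I has dimension at least 2n−2 over ℝ. -/

import Mathlib

open Polynomial
open scoped Classical

/-- Degree of a vertex. -/
noncomputable def sdeg {V : Type*} (G : SimpleGraph V) (v : V) : ℕ := {u | G.Adj v u}.ncard

/-- Sombor matrix of a graph. -/
noncomputable def somborMatrix {V : Type*} (G : SimpleGraph V) : Matrix V V ℝ :=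
  Matrix.of fun u v =>
    if G.Adj u v then Real.sqrt ((sdeg G u : ℝ) ^ 2 + (sdeg G v : ℝ) ^ 2) else 0

/-- Sombor characteristic polynomial det(x·I − S(Γ)). -/
noncomputable def somborCharpoly {V : Type*} [Fintype V] [DecidableEq V] (G : SimpleGraph V) :
    Polynomial ℝ :=
  (somborMatrix G).charpoly

noncomputable def rt2 : ℝ := Real.sqrt 2

/-- The `R`-super `Γ` graph. -/
def superGraph {V : Type*} (A : SimpleGraph V) (r : V → V → Prop) (hr : Equivalence r) :
    SimpleGraph V where
  Adj x y := x ≠ y ∧ (r x y ∨ ∃ x' y', r x x' ∧ r y y' ∧ A.Adj x' y')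
  symm := by
    constructor
    rintro x y ⟨hxy, h | ⟨x', y', hx, hy, hadj⟩⟩
    · exact ⟨hxy.symm, Or.inl (hr.symm h)⟩
    · exact ⟨hxy.symm, Or.inr ⟨y', x', hy, hx, hadj.symm⟩⟩
  loopless := by constructor; rintro x ⟨h, -⟩; exact h rfl

/-- Same-order relation. -/
def orderRel (G : Type*) [Monoid G] : G → G → Prop := fun x y => orderOf x = orderOf y

theorem orderRel_equivalence (G : Type*) [Monoid G] : Equivalence (orderRel G) :=
  ⟨fun _ => rfl, fun h => h.symm, fun h1 h2 => h1.trans h2⟩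

/-- Conjugacy relation. -/
def conjRel (G : Type*) [Group G] : G → G → Prop := fun x y => ∃ a : G, x = a * y * a⁻¹

theorem conjRel_equivalence (G : Type*) [Group G] : Equivalence (conjRel G) := by
  constructor
  · intro x; exact ⟨1, by simp⟩
  · rintro x y ⟨a, rfl⟩; exact ⟨a⁻¹, by group⟩
  · rintro x y z ⟨a, rfl⟩ ⟨b, rfl⟩; exact ⟨a * b, by group⟩

/-- Commuting graph. -/
def commutingGraph (G : Type*) [Group G] : SimpleGraph G where
  Adj x y := x ≠ y ∧ x * y = y * x
  symm := by constructor; rintro x y ⟨h, c⟩; exact ⟨h.symm, c.symm⟩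
  loopless := by constructor; rintro x ⟨h, -⟩; exact h rfl

/-- Power graph. -/
def powerGraph (G : Type*) [Group G] : SimpleGraph G where
  Adj x y := x ≠ y ∧ (x ∈ Subgroup.zpowers y ∨ y ∈ Subgroup.zpowers x)
  symm := by constructor; rintro x y ⟨h, c⟩; exact ⟨h.symm, c.symm⟩
  loopless := by constructor; rintro x ⟨h, -⟩; exact h rfl

/-- Enhanced power graph. -/
def enhancedPowerGraph (G : Type*) [Group G] : SimpleGraph G where
  Adj x y := x ≠ y ∧ ∃ z : G, x ∈ Subgroup.zpowers z ∧ y ∈ Subgroup.zpowers z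
  symm := by constructor; rintro x y ⟨h, z, hx, hy⟩; exact ⟨h.symm, z, hy, hx⟩
  loopless := by constructor; rintro x ⟨h, -⟩; exact h rfl

namespace QSuper

open QuaternionGroup Matrix

variable {n : ℕ}

theorem inv_a (i : ZMod (2*n)) : (a i : QuaternionGroup n)⁻¹ = a (-i) := rfl
theorem inv_xa (i : ZMod (2*n)) : (xa i : QuaternionGroup n)⁻¹ = xa ((n : ZMod (2*n)) + i) := rfl

theorem n_add_n : ((n : ZMod (2*n)) + n = 0) := by
  have : (((n + n : ℕ)) : ZMod (2*n)) = 0 := by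
    rw [show n + n = 2*n by ring, ZMod.natCast_self]
  push_cast at this; exact this

/-- conjugates of `xa j` -/
theorem conj_xa (g : QuaternionGroup n) (j : ZMod (2*n)) :
    ∃ t : ZMod (2*n), g * xa j * g⁻¹ = xa (j + (t + t)) := by
  cases g with
  | a k =>
    refine ⟨-k, ?_⟩
    rw [inv_a, a_mul_xa, xa_mul_a]
    ring_nf
  | xa m =>
    refine ⟨m - j, ?_⟩
    rw [inv_xa, xa_mul_xa, a_mul_xa]
    congr 1
    ring_nf

/-- conjugates of `a m` -/
theorem conj_a (g : QuaternionGroup n) (m : ZMod (2*n)) :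
    g * a m * g⁻¹ = a m ∨ g * a m * g⁻¹ = a (-m) := by
  cases g with
  | a k => left; rw [inv_a, a_mul_a, a_mul_a]; ring_nf
  | xa k =>
    right
    rw [inv_xa, xa_mul_a, xa_mul_xa]
    congr 1
    have := n_add_n (n := n)
    linear_combination this

theorem mem_zpowers_xa [NeZero n] {g : QuaternionGroup n} {s : ZMod (2*n)}
    (h : g ∈ Subgroup.zpowers (xa s)) :
    g = 1 ∨ g = xa s ∨ g = a n ∨ g = xa (s + (n : ZMod (2*n))) := by
  rw [← mem_powers_iff_mem_zpowers, Submonoid.mem_powers_iff] at h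
  obtain ⟨k, hk⟩ := h
  rw [← pow_mod_orderOf, orderOf_xa] at hk
  have hlt : k % 4 < 4 := Nat.mod_lt _ (by norm_num)
  interval_cases h : k % 4
  · left; exact hk.symm
  · right; left; rw [← hk, pow_one]
  · right; right; left; rw [← hk, xa_sq]
  · right; right; right
    rw [← hk, pow_succ, xa_sq, a_mul_xa]
    congr 1
    have := n_add_n (n := n)
    linear_combination -this

theorem mem_zpowers_a [NeZero n] {g : QuaternionGroup n} {m : ZMod (2*n)}
    (h : g ∈ Subgroup.zpowers (a m)) : ∃ j, g = a j := by
  rw [← mem_powers_iff_mem_zpowers, Submonoid.mem_powers_iff] at h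
  obtain ⟨k, hk⟩ := h
  subst hk
  induction k with
  | zero => exact ⟨0, rfl⟩
  | succ k ih =>
    obtain ⟨j, hj⟩ := ih
    exact ⟨j + m, by rw [pow_succ, hj, a_mul_a]⟩

theorem pow_adj_a_xa [NeZero n] {m s : ZMod (2*n)}
    (h : (a m : QuaternionGroup n) ∈ Subgroup.zpowers (xa s) ∨
      (xa s : QuaternionGroup n) ∈ Subgroup.zpowers (a m)) : m = 0 ∨ m = n := by
  rcases h with h | h
  · rcases mem_zpowers_xa h with h | h | h | h
    · left; rw [one_def] at h; injection h
    · exact absurd h (by simp)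
    · right; injection h
    · exact absurd h (by simp)
  · obtain ⟨j, hj⟩ := mem_zpowers_a h
    exact absurd hj (by simp)

theorem pow_adj_xa_xa [NeZero n] {t s : ZMod (2*n)}
    (h : (xa t : QuaternionGroup n) ∈ Subgroup.zpowers (xa s) ∨
      (xa s : QuaternionGroup n) ∈ Subgroup.zpowers (xa t)) : t = s ∨ t = s + (n : ZMod (2*n)) := by
  have key : ∀ u v : ZMod (2*n), (xa u : QuaternionGroup n) ∈ Subgroup.zpowers (xa v) →
      u = v ∨ u = v + (n : ZMod (2*n)) := by
    intro u v hh
    rcases mem_zpowers_xa hh with h' | h' | h' | h'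
    · rw [one_def] at h'; exact absurd h' (fun hc => nomatch hc)
    · left; injection h'
    · exact absurd h' (by simp)
    · right; injection h'
  rcases h with h | h
  · exact key _ _ h
  · rcases key _ _ h with h' | h'
    · left; exact h'.symm
    · right
      have := n_add_n (n := n)
      linear_combination -h' - this

end QSuper

namespace QSuper
open QuaternionGroup Matrix

variable {n : ℕ}

/-- abbreviation for the conjugacy super power graph -/
noncomputable abbrev QG (n : ℕ) : SimpleGraph (QuaternionGroup n) :=
  superGraph (powerGraph (QuaternionGroup n)) (conjRel (QuaternionGroup n))
    (conjRel_equivalence (QuaternionGroup n))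

theorem adj_xa_xa [NeZero n] (heven : Even n) (i j : ZMod (2*n)) :
    (QG n).Adj (xa i) (xa j) ↔ (i ≠ j ∧ ∃ k : ZMod (2*n), j = i + (k + k)) := by
  constructor
  · rintro ⟨hne, h | ⟨x', y', ⟨g, hx⟩, ⟨g', hy⟩, hadj⟩⟩
    · obtain ⟨g, hg⟩ := h
      obtain ⟨t, ht⟩ := conj_xa g j
      rw [ht] at hg
      injection hg with hg
      refine ⟨fun hij => hne (by rw [hij]), -t, by linear_combination -hg⟩
    · have hii : i ≠ j := fun hij => hne (by rw [hij])
      refine ⟨hii, ?_⟩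
      -- x' is a conjugate of xa i, y' of xa j
      have hx' : ∃ t, x' = xa (i + (t + t)) := by
        obtain ⟨t, ht⟩ := conj_xa g⁻¹ i
        rw [inv_inv] at ht
        exact ⟨t, by rw [← ht, hx]; group⟩
      have hy' : ∃ t, y' = xa (j + (t + t)) := by
        obtain ⟨t, ht⟩ := conj_xa g'⁻¹ j
        rw [inv_inv] at ht
        exact ⟨t, by rw [← ht, hy]; group⟩
      obtain ⟨t, rfl⟩ := hx'
      obtain ⟨s, rfl⟩ := hy'
      obtain ⟨-, hmem⟩ := hadj
      obtain ⟨m, hm⟩ := heven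
      have hm' : (n : ZMod (2*n)) = (m : ZMod (2*n)) + m := by
        rw [hm]; push_cast; ring
      rcases pow_adj_xa_xa hmem with h' | h'
      · exact ⟨t - s, by linear_combination -h'⟩
      · exact ⟨t - s - m, by linear_combination -h' - hm'⟩
  · rintro ⟨hij, k, hk⟩
    refine ⟨by simp [hij], Or.inl ⟨a k, ?_⟩⟩
    rw [inv_a, a_mul_xa, xa_mul_a]
    congr 1
    linear_combination -hk

theorem adj_a_xa [NeZero n] (i m : ZMod (2*n)) :
    (QG n).Adj (a m) (xa i) ↔ (m = 0 ∨ m = (n : ZMod (2*n))) := by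
  constructor
  · rintro ⟨hne, h | ⟨x', y', ⟨g, hx⟩, ⟨g', hy⟩, hadj⟩⟩
    · obtain ⟨g, hg⟩ := h
      obtain ⟨t, ht⟩ := conj_xa g i
      rw [ht] at hg
      exact absurd hg (by simp)
    · have hx' : x' = a m ∨ x' = a (-m) := by
        have := conj_a g⁻¹ m
        rw [inv_inv] at this
        rcases this with h' | h'
        · left; rw [← h', hx]; group
        · right; rw [← h', hx]; group
      have hy' : ∃ t, y' = xa (i + (t + t)) := by
        obtain ⟨t, ht⟩ := conj_xa g'⁻¹ i
        rw [inv_inv] at ht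
        exact ⟨t, by rw [← ht, hy]; group⟩
      obtain ⟨t, rfl⟩ := hy'
      obtain ⟨-, hmem⟩ := hadj
      have hnn := n_add_n (n := n)
      rcases hx' with rfl | rfl
      · exact pow_adj_a_xa hmem
      · rcases pow_adj_a_xa hmem with h' | h'
        · left; linear_combination -h'
        · right; linear_combination -h' - hnn
  · rintro (rfl | rfl)
    · refine ⟨(fun hc => nomatch hc), Or.inr ⟨a 0, xa i, ⟨1, by group⟩, ⟨1, by group⟩, (fun hc => nomatch hc), Or.inl ?_⟩⟩
      rw [← one_def]
      exact Subgroup.one_mem _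
    · refine ⟨by simp, Or.inr ⟨a n, xa i, ⟨1, by group⟩, ⟨1, by group⟩, by simp, Or.inl ?_⟩⟩
      rw [← xa_sq i]
      exact Subgroup.mem_zpowers_iff.mpr ⟨2, by rw [zpow_two, sq]⟩

end QSuper

namespace QSuper
open QuaternionGroup Matrix

variable {n : ℕ}

theorem deg_xa [NeZero n] (hn : 2 ≤ n) (heven : Even n) (i : ZMod (2*n)) :
    sdeg (QG n) (xa i) = n + 1 := by
  haveI : NeZero (2*n) := ⟨by omega⟩
  have castinj : ∀ p q : ℕ, p < 2*n → q < 2*n →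
      ((p : ZMod (2*n)) = (q : ZMod (2*n))) → p = q := by
    intro p q hp hq h
    have := congrArg ZMod.val h
    rwa [ZMod.val_cast_of_lt hp, ZMod.val_cast_of_lt hq] at this
  have hne0 : (n : ZMod (2*n)) ≠ 0 := by
    intro h
    have : n = 0 := by
      have h0 : ((0 : ℕ) : ZMod (2*n)) = 0 := by norm_cast
      exact castinj n 0 (by omega) (by omega) (by rw [h, h0])
    omega
  -- the double cast lemma
  have h2n : ((2*n : ℕ) : ZMod (2*n)) = 0 := ZMod.natCast_self _
  have hdouble : ∀ k : ZMod (2*n), ∃ r : ℕ, r < n ∧ (r = 0 → k + k = 0) ∧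
      ((r : ZMod (2*n)) + (r : ZMod (2*n)) = k + k) := by
    intro k
    have hdm := Nat.div_add_mod k.val n
    refine ⟨k.val % n, Nat.mod_lt _ (by omega), ?_, ?_⟩
    · intro hr
      have hd : 2 * k.val = (2*n) * (k.val / n) := by rw [Nat.mul_assoc]; omega
      have h0 : ((2 * k.val : ℕ) : ZMod (2*n)) = 0 := by
        rw [hd, Nat.cast_mul, h2n, zero_mul]
      push_cast at h0
      conv_lhs => rw [← ZMod.natCast_zmod_val k]
      linear_combination h0
    · have hd : 2 * k.val = 2 * (k.val % n) + (2*n) * (k.val / n) := by rw [Nat.mul_assoc]; omega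
      have key : ((2 * k.val : ℕ) : ZMod (2*n)) = ((2 * (k.val % n) : ℕ) : ZMod (2*n)) := by
        rw [hd, Nat.cast_add, Nat.cast_mul ((2*n)) _, h2n, zero_mul, add_zero]
      push_cast at key
      conv_rhs => rw [← ZMod.natCast_zmod_val k]
      linear_combination -key
  set F : Finset (QuaternionGroup n) :=
    insert (a 0) (insert (a (n : ZMod (2*n)))
      ((Finset.Ico 1 n).image fun k : ℕ =>
        xa (i + ((k : ZMod (2*n)) + (k : ZMod (2*n)))))) with hF
  have himne : ∀ k : ℕ, 1 ≤ k → k < n →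
      i + ((k : ZMod (2*n)) + (k : ZMod (2*n))) ≠ i := by
    intro k hk1 hk2 h
    have h2 : ((2 * k : ℕ) : ZMod (2*n)) = 0 := by
      push_cast
      linear_combination h
    rw [ZMod.natCast_eq_zero_iff] at h2
    have := Nat.le_of_dvd (by omega) h2
    omega
  have hset : {u | (QG n).Adj (xa i) u} = ↑F := by
    ext u
    simp only [hF, Set.mem_setOf_eq, Finset.coe_insert, Set.mem_insert_iff,
      Finset.coe_image, Set.mem_image, Finset.mem_coe, Finset.mem_Ico]
    cases u with
    | a m =>
      rw [(QG n).adj_comm, adj_a_xa]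
      simp only [a.injEq, reduceCtorEq]
      constructor
      · rintro (rfl | rfl)
        · exact Or.inl rfl
        · exact Or.inr (Or.inl rfl)
      · rintro (rfl | rfl | ⟨k, hk, h⟩)
        · exact Or.inl rfl
        · exact Or.inr rfl
        · exact absurd h (by simp)
    | xa j =>
      rw [adj_xa_xa heven]
      constructor
      · rintro ⟨hij, k, rfl⟩
        right; right
        obtain ⟨r, hr1, hr2, hr3⟩ := hdouble k
        have hr0 : r ≠ 0 := by
          intro h0
          exact hij (by rw [hr2 h0, add_zero])
        exact ⟨r, ⟨by omega, hr1⟩, by rw [hr3]⟩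
      · rintro (h | h | ⟨k, ⟨hk1, hk2⟩, h⟩)
        · exact absurd h (fun hc => nomatch hc)
        · exact absurd h (by simp)
        · injection h with h
          refine ⟨?_, (k : ZMod (2*n)), h.symm⟩
          rw [← h]
          exact fun hc => himne k hk1 hk2 hc.symm
  rw [sdeg, hset, Set.ncard_coe_finset, hF]
  rw [Finset.card_insert_of_notMem (by simp [Ne, hne0.symm, -a_zero]),
    Finset.card_insert_of_notMem (by simp),
    Finset.card_image_of_injOn, Nat.card_Ico]
  · omega
  · intro p hp q hq h
    simp only [Finset.coe_Ico, Set.mem_Ico] at hp hq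
    injection h with h
    have h2 : ((2*p : ℕ) : ZMod (2*n)) = ((2*q : ℕ) : ZMod (2*n)) := by
      push_cast
      linear_combination h
    have := castinj _ _ (by omega) (by omega) h2
    omega

end QSuper

namespace QSuper
open QuaternionGroup Matrix

variable {n : ℕ}

theorem entry_eq [NeZero n] (hn : 2 ≤ n) (heven : Even n) {j j' : ZMod (2*n)}
    (hne : j ≠ j') (hpar : ∃ k : ZMod (2*n), j' = j + (k + k)) (w : QuaternionGroup n) :
    (somborMatrix (QG n) + (((n:ℝ)+1) * Real.sqrt 2) •
        (1 : Matrix (QuaternionGroup n) (QuaternionGroup n) ℝ)) w (xa j) =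
    (somborMatrix (QG n) + (((n:ℝ)+1) * Real.sqrt 2) • 1) w (xa j') := by
  obtain ⟨k0, hk0⟩ := hpar
  have hadjjj' : (QG n).Adj (xa j) (xa j') := (adj_xa_xa heven j j').mpr ⟨hne, k0, hk0⟩
  have hsqrt : Real.sqrt ((((n+1 : ℕ)) : ℝ)^2 + (((n+1:ℕ)) : ℝ)^2)
      = ((n:ℝ)+1) * Real.sqrt 2 := by
    push_cast
    rw [show ((n:ℝ)+1)^2 + ((n:ℝ)+1)^2 = 2 * ((n:ℝ)+1)^2 by ring,
      Real.sqrt_mul (by norm_num), Real.sqrt_sq (by positivity), mul_comm]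
  simp only [Matrix.add_apply, Matrix.smul_apply, Matrix.one_apply, somborMatrix,
    Matrix.of_apply, smul_eq_mul, deg_xa hn heven]
  cases w with
  | a m =>
    have h1 : (QG n).Adj (a m) (xa j) ↔ (QG n).Adj (a m) (xa j') := by
      rw [adj_a_xa, adj_a_xa]
    rw [if_neg (by simp : ¬ (a m : QuaternionGroup n) = xa j),
      if_neg (by simp : ¬ (a m : QuaternionGroup n) = xa j')]
    by_cases h : (QG n).Adj (a m) (xa j)
    · rw [if_pos h, if_pos (h1.mp h)]
    · rw [if_neg h, if_neg fun hc => h (h1.mpr hc)]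
  | xa k =>
    simp only [deg_xa hn heven]
    by_cases hkj : k = j
    · subst hkj
      rw [if_neg ((QG n).irrefl), if_pos hadjjj', if_pos rfl,
        if_neg (fun hc : xa k = xa j' => hne (by injection hc)), hsqrt]
      ring
    · by_cases hkj' : k = j'
      · subst hkj'
        rw [if_pos hadjjj'.symm, if_neg ((QG n).irrefl), if_pos rfl,
          if_neg (fun hc : xa k = xa j => hne (by injection hc with h; exact h.symm)), hsqrt]
        ring
      · have h1 : (QG n).Adj (xa k) (xa j) ↔ (QG n).Adj (xa k) (xa j') := by
          rw [adj_xa_xa heven, adj_xa_xa heven]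
          constructor
          · rintro ⟨-, t, ht⟩
            exact ⟨hkj', t + k0, by linear_combination hk0 + ht⟩
          · rintro ⟨-, t, ht⟩
            exact ⟨hkj, t - k0, by linear_combination ht - hk0⟩
        rw [if_neg (fun hc : xa k = xa j => hkj (by injection hc)),
          if_neg (fun hc : xa k = xa j' => hkj' (by injection hc))]
        by_cases h : (QG n).Adj (xa k) (xa j)
        · rw [if_pos h, if_pos (h1.mp h)]
        · rw [if_neg h, if_neg fun hc => h (h1.mpr hc)]

theorem parity_base [NeZero n] (j : ZMod (2*n)) :
    (∃ k : ZMod (2*n), j = k + k) ∨ (∃ k : ZMod (2*n), j = 1 + (k + k)) := by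
  haveI : NeZero (2*n) := ⟨by have := NeZero.pos n; omega⟩
  rcases Nat.even_or_odd j.val with ⟨c, hc⟩ | ⟨c, hc⟩
  · left
    refine ⟨(c : ZMod (2*n)), ?_⟩
    conv_lhs => rw [← ZMod.natCast_zmod_val j]
    rw [hc]; push_cast; ring
  · right
    refine ⟨(c : ZMod (2*n)), ?_⟩
    conv_lhs => rw [← ZMod.natCast_zmod_val j]
    rw [hc]; push_cast; ring

open scoped Classical in
noncomputable def bpar (n : ℕ) : ZMod (2*n) → ZMod (2*n) :=
  fun j => if ∃ k : ZMod (2*n), j = k + k then 0 else 1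

theorem bpar_mem (j : ZMod (2*n)) : bpar n j = 0 ∨ bpar n j = 1 := by
  unfold bpar; split
  · exact Or.inl rfl
  · exact Or.inr rfl

theorem bpar_par [NeZero n] (j : ZMod (2*n)) :
    ∃ k : ZMod (2*n), bpar n j = j + (k + k) := by
  unfold bpar; split
  · rename_i h
    obtain ⟨k, hk⟩ := h
    exact ⟨-k, by linear_combination -hk⟩
  · rename_i h
    rcases parity_base j with h' | ⟨k, hk⟩
    · exact absurd h' h
    · exact ⟨-k, by linear_combination -hk⟩

noncomputable def vvec (n : ℕ) (j : ZMod (2*n)) : QuaternionGroup n → ℝ :=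
  Pi.single (xa j) 1 - Pi.single (xa (bpar n j)) 1

end QSuper

open QuaternionGroup QSuper Matrix

theorem stmt19 (n : ℕ) [NeZero n] (hn : 2 ≤ n) (heven : Even n) :
    2 * n - 2 ≤ Module.finrank ℝ (LinearMap.ker (Matrix.toLin'
      (somborMatrix (superGraph (powerGraph (QuaternionGroup n))
          (conjRel (QuaternionGroup n)) (conjRel_equivalence (QuaternionGroup n))) +
        (((n : ℝ) + 1) * Real.sqrt 2) •
          (1 : Matrix (QuaternionGroup n) (QuaternionGroup n) ℝ)))) := by
  classical
  set M : Matrix (QuaternionGroup n) (QuaternionGroup n) ℝ :=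
    somborMatrix (QG n) + (((n : ℝ) + 1) * Real.sqrt 2) • 1 with hM
  set T := Matrix.toLin' M with hT
  set v : {j : ZMod (2*n) // j ≠ 0 ∧ j ≠ 1} → (QuaternionGroup n → ℝ) :=
    fun i => vvec n i.1 with hv
  have hone : (1 : ZMod (2*n)) ≠ 0 := by
    haveI : Fact (1 < 2*n) := ⟨by omega⟩
    exact one_ne_zero
  have hne : ∀ i : {j : ZMod (2*n) // j ≠ 0 ∧ j ≠ 1}, i.1 ≠ bpar n i.1 := by
    intro i h
    rcases bpar_mem i.1 with h' | h' <;> rw [h'] at h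
    · exact i.2.1 h
    · exact i.2.2 h
  -- kernel membership
  have hker : ∀ i, v i ∈ LinearMap.ker T := by
    intro i
    rw [LinearMap.mem_ker, hT, Matrix.toLin'_apply, hv]
    show M *ᵥ vvec n i.1 = 0
    unfold vvec
    rw [Matrix.mulVec_sub]
    funext w
    simp only [Pi.sub_apply, Pi.zero_apply, Matrix.mulVec_single, mul_one, MulOpposite.op_one, one_smul]
    rw [sub_eq_zero]
    exact entry_eq hn heven (hne i) (bpar_par i.1) w
  -- linear independence
  have hLI : LinearIndependent ℝ v := by
    rw [Fintype.linearIndependent_iff]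
    intro g hg i
    have h0 := congrFun hg (xa i.1)
    rw [Finset.sum_apply, Pi.zero_apply] at h0
    rw [Finset.sum_eq_single i] at h0
    · have hv1 : v i (xa i.1) = 1 := by
        show vvec n i.1 (xa i.1) = 1
        unfold vvec
        have h2 : (xa i.1 : QuaternionGroup n) ≠ xa (bpar n i.1) := by
          intro hc; injection hc with hc; exact hne i hc
        rw [Pi.sub_apply, Pi.single_apply, Pi.single_apply, if_pos rfl, if_neg h2, sub_zero]
      rw [Pi.smul_apply, hv1, smul_eq_mul, mul_one] at h0
      exact h0
    · intro i' _ hne'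
      have hv1 : v i' (xa i.1) = 0 := by
        show vvec n i'.1 (xa i.1) = 0
        unfold vvec
        have h2 : (xa i.1 : QuaternionGroup n) ≠ xa (bpar n i'.1) := by
          intro hc
          injection hc with hc
          rcases bpar_mem (n := n) i'.1 with h' | h' <;> rw [h'] at hc
          · exact i.2.1 hc
          · exact i.2.2 hc
        have h3 : (xa i.1 : QuaternionGroup n) ≠ xa i'.1 := by
          intro hc
          injection hc with hc
          exact hne' (Subtype.ext hc.symm)
        rw [Pi.sub_apply, Pi.single_apply, Pi.single_apply, if_neg h3, if_neg h2, sub_zero]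
      rw [Pi.smul_apply, hv1, smul_eq_mul, mul_zero]
    · intro h
      exact absurd (Finset.mem_univ i) h
  have hcard : Fintype.card {j : ZMod (2*n) // j ≠ 0 ∧ j ≠ 1} = 2 * n - 2 := by
    rw [Fintype.card_subtype]
    have hfil : (Finset.univ.filter fun j : ZMod (2*n) => j ≠ 0 ∧ j ≠ 1)
        = Finset.univ \ {0, 1} := by
      ext x
      simp [not_or]
    rw [hfil, Finset.card_sdiff_of_subset (Finset.subset_univ _), Finset.card_univ, ZMod.card,
      Finset.card_insert_of_notMem (by simpa using hone.symm), Finset.card_singleton]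
  have hspan : Submodule.span ℝ (Set.range v) ≤ LinearMap.ker T :=
    Submodule.span_le.mpr (by rintro _ ⟨i, rfl⟩; exact hker i)
  calc 2 * n - 2 = Fintype.card {j : ZMod (2*n) // j ≠ 0 ∧ j ≠ 1} := hcard.symm
    _ = Module.finrank ℝ (Submodule.span ℝ (Set.range v)) := (finrank_span_eq_card hLI).symm
    _ ≤ Module.finrank ℝ (LinearMap.ker T) := Submodule.finrank_mono hspan
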